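/- As t → +∞, Φ(t) is asymptotic to Pólya's kernel Φ_P(t); that is, lim_{t→+∞} Φ(t)/Φ_P(t) = 1, where Φ(t) = Σ_{n=1}^{∞} (2π² n⁴ e^{9t/4} − 3π n² e^{5t/4}) e^{−π n² e^t} and Φ_P(t) = 4π² cosh(9t/4) e^{−2π cosh t}. -/

import Mathlib

open Real Filter

/-- The Riemann xi kernel
`Φ(t) = ∑_{n=1}^{∞} (2π² n⁴ e^{9t/4} − 3π n² e^{5t/4}) e^{−π n² e^t}`. -/
noncomputable def Phi (t : ℝ) : ℝ :=
  ∑' n : ℕ,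
    (2 * π ^ 2 * (n + 1 : ℝ) ^ 4 * exp (9 * t / 4)
      - 3 * π * (n + 1 : ℝ) ^ 2 * exp (5 * t / 4)) * exp (-π * (n + 1 : ℝ) ^ 2 * exp t)

/-- Pólya's kernel `Φ_P(t) = 4π² cosh(9t/4) e^{−2π cosh t}`. -/
noncomputable def PhiP (t : ℝ) : ℝ :=
  4 * π ^ 2 * cosh (9 * t / 4) * exp (-2 * π * cosh t)


noncomputable def PhiTerm (n : ℕ) (t : ℝ) : ℝ :=
  (2 * π ^ 2 * (n + 1 : ℝ) ^ 4 * exp (9 * t / 4)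
      - 3 * π * (n + 1 : ℝ) ^ 2 * exp (5 * t / 4)) * exp (-π * (n + 1 : ℝ) ^ 2 * exp t)

lemma summable_aux {c : ℝ} (hc : 0 < c) :
    Summable (fun n : ℕ => ((n : ℝ) + 1) ^ 4 * exp (-c * ((n : ℝ) + 1) ^ 2)) := by
  have h1 : Summable (fun n : ℕ => (((n + 1 : ℕ) : ℝ)) ^ 4 * exp (-c * ((n + 1 : ℕ) : ℝ))) :=
    (summable_nat_add_iff 1).2 (Real.summable_pow_mul_exp_neg_nat_mul 4 hc)
  refine h1.of_nonneg_of_le (fun n => ?_) (fun n => ?_)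
  · positivity
  · push_cast
    have hn : (0 : ℝ) ≤ (n : ℝ) := n.cast_nonneg
    have h2 : exp (-c * ((n : ℝ) + 1) ^ 2) ≤ exp (-c * ((n : ℝ) + 1)) := by
      apply exp_le_exp.2
      have key : (0:ℝ) ≤ c * (((n:ℝ) + 1) * (n:ℝ)) := by positivity
      nlinarith [key]
    have h3 : (0:ℝ) ≤ ((n : ℝ) + 1) ^ 4 := by positivity
    calc ((n : ℝ) + 1) ^ 4 * exp (-c * ((n : ℝ) + 1) ^ 2)
        ≤ ((n : ℝ) + 1) ^ 4 * exp (-c * ((n : ℝ) + 1)) :=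
          mul_le_mul_of_nonneg_left h2 h3
      _ = _ := by norm_num

lemma summable_phiTerm (t : ℝ) : Summable (fun n => PhiTerm n t) := by
  have hc : 0 < π * exp t := by positivity
  refine Summable.of_norm_bounded
    ((summable_aux hc).mul_left _ : Summable (fun n : ℕ => (2 * π ^ 2 * exp (9 * t / 4) + 3 * π * exp (5 * t / 4))
      * (((n : ℝ) + 1) ^ 4 * exp (-(π * exp t) * ((n : ℝ) + 1) ^ 2))))
    (fun n => ?_)
  set N : ℝ := (n : ℝ) + 1 with hNdef
  have hN : (1 : ℝ) ≤ N := by simp [hNdef]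
  have hE : exp (-π * N ^ 2 * exp t) = exp (-(π * exp t) * N ^ 2) := by ring_nf
  have habs : |2 * π ^ 2 * N ^ 4 * exp (9 * t / 4) - 3 * π * N ^ 2 * exp (5 * t / 4)|
      ≤ (2 * π ^ 2 * exp (9 * t / 4) + 3 * π * exp (5 * t / 4)) * N ^ 4 := by
    have h0 := abs_sub (2 * π ^ 2 * N ^ 4 * exp (9 * t / 4)) (3 * π * N ^ 2 * exp (5 * t / 4))
    have h1 : |2 * π ^ 2 * N ^ 4 * exp (9 * t / 4)| = 2 * π ^ 2 * N ^ 4 * exp (9 * t / 4) := by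
      rw [abs_of_nonneg]; positivity
    have h2 : |3 * π * N ^ 2 * exp (5 * t / 4)| = 3 * π * N ^ 2 * exp (5 * t / 4) := by
      rw [abs_of_nonneg]; positivity
    have hNN : N ^ 2 ≤ N ^ 4 := pow_le_pow_right₀ hN (by norm_num)
    have hB : 3 * π * exp (5 * t / 4) * N ^ 2 ≤ 3 * π * exp (5 * t / 4) * N ^ 4 :=
      mul_le_mul_of_nonneg_left hNN (by positivity)
    nlinarith [hB]
  have hnorm : ‖PhiTerm n t‖
      = |2 * π ^ 2 * N ^ 4 * exp (9 * t / 4) - 3 * π * N ^ 2 * exp (5 * t / 4)|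
      * exp (-π * N ^ 2 * exp t) := by
    rw [PhiTerm, norm_mul, norm_of_nonneg (exp_nonneg _)]; rfl
  rw [hnorm, hE]
  calc |2 * π ^ 2 * N ^ 4 * exp (9 * t / 4) - 3 * π * N ^ 2 * exp (5 * t / 4)|
      * exp (-(π * exp t) * N ^ 2)
      ≤ ((2 * π ^ 2 * exp (9 * t / 4) + 3 * π * exp (5 * t / 4)) * N ^ 4)
          * exp (-(π * exp t) * N ^ 2) :=
        mul_le_mul_of_nonneg_right habs (exp_nonneg _)
    _ = (2 * π ^ 2 * exp (9 * t / 4) + 3 * π * exp (5 * t / 4))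
          * (N ^ 4 * exp (-(π * exp t) * N ^ 2)) := by ring

noncomputable def Ctail : ℝ :=
  ∑' n : ℕ, 5 * π ^ 2 * ((n : ℝ) + 2) ^ 4 * exp (-π * (((n : ℝ) + 2) ^ 2 - 2))

lemma summable_ctail :
    Summable (fun n : ℕ => 5 * π ^ 2 * ((n : ℝ) + 2) ^ 4 * exp (-π * (((n : ℝ) + 2) ^ 2 - 2))) := by
  have h1 : Summable (fun n : ℕ => (((n + 2 : ℕ) : ℝ)) ^ 4 * exp (-π * ((n + 2 : ℕ) : ℝ))) :=
    (summable_nat_add_iff 2).2 (Real.summable_pow_mul_exp_neg_nat_mul 4 pi_pos)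
  refine (h1.mul_left (5 * π ^ 2)).of_nonneg_of_le (fun n => ?_) (fun n => ?_)
  · positivity
  · push_cast
    have hn : (0 : ℝ) ≤ (n : ℝ) := n.cast_nonneg
    have h2 : exp (-π * (((n : ℝ) + 2) ^ 2 - 2)) ≤ exp (-π * ((n : ℝ) + 2)) := by
      apply exp_le_exp.2
      have key : (0:ℝ) ≤ π * (((n:ℝ) + 2) ^ 2 - 2 - ((n:ℝ) + 2)) := by
        apply mul_nonneg pi_pos.le; nlinarith
      nlinarith [key]
    calc 5 * π ^ 2 * ((n : ℝ) + 2) ^ 4 * exp (-π * (((n : ℝ) + 2) ^ 2 - 2))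
        ≤ 5 * π ^ 2 * ((n : ℝ) + 2) ^ 4 * exp (-π * ((n : ℝ) + 2)) := by
          apply mul_le_mul_of_nonneg_left h2; positivity
      _ = 5 * π ^ 2 * (((n : ℝ) + 2) ^ 4 * exp (-π * ((n : ℝ) + 2))) := by ring

lemma Ctail_nonneg : 0 ≤ Ctail :=
  tsum_nonneg (fun n => by positivity)

lemma term_bound {k t : ℝ} (hk : 2 ≤ k) (ht : 0 ≤ t) :
    |(2 * π ^ 2 * k ^ 4 * exp (9 * t / 4) - 3 * π * k ^ 2 * exp (5 * t / 4))
        * exp (-π * k ^ 2 * exp t)|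
      ≤ (5 * π ^ 2 * k ^ 4 * exp (-π * (k ^ 2 - 2)))
          * (exp (9 * t / 4) * exp (-(2 * π) * exp t)) := by
  have hπ1 : (1 : ℝ) ≤ π := by nlinarith [pi_gt_three]
  have hE1 : (1 : ℝ) ≤ exp t := one_le_exp ht
  have hYX : exp (5 * t / 4) ≤ exp (9 * t / 4) := exp_le_exp.2 (by linarith)
  have hk2 : k ^ 2 ≤ k ^ 4 := pow_le_pow_right₀ (by linarith) (by norm_num)
  rw [abs_mul, abs_of_nonneg (exp_nonneg _)]
  have habs : |2 * π ^ 2 * k ^ 4 * exp (9 * t / 4) - 3 * π * k ^ 2 * exp (5 * t / 4)|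
      ≤ 5 * π ^ 2 * k ^ 4 * exp (9 * t / 4) := by
    have h0 := abs_sub (2 * π ^ 2 * k ^ 4 * exp (9 * t / 4)) (3 * π * k ^ 2 * exp (5 * t / 4))
    have h1 : |2 * π ^ 2 * k ^ 4 * exp (9 * t / 4)| = 2 * π ^ 2 * k ^ 4 * exp (9 * t / 4) := by
      rw [abs_of_nonneg]; positivity
    have h2 : |3 * π * k ^ 2 * exp (5 * t / 4)| = 3 * π * k ^ 2 * exp (5 * t / 4) := by
      rw [abs_of_nonneg]; positivity
    have hB : 3 * π * k ^ 2 * exp (5 * t / 4) ≤ 3 * π ^ 2 * k ^ 4 * exp (9 * t / 4) := by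
      have s1 : 3 * π * k ^ 2 * exp (5 * t / 4) ≤ 3 * π * k ^ 4 * exp (5 * t / 4) := by
        have := mul_le_mul_of_nonneg_right hk2
          (show (0:ℝ) ≤ 3 * π * exp (5 * t / 4) by positivity)
        nlinarith [this]
      have s2 : 3 * π * k ^ 4 * exp (5 * t / 4) ≤ 3 * π * k ^ 4 * exp (9 * t / 4) :=
        mul_le_mul_of_nonneg_left hYX (by positivity)
      have s3 : 3 * π * k ^ 4 * exp (9 * t / 4) ≤ 3 * π ^ 2 * k ^ 4 * exp (9 * t / 4) := by
        have hππ : 3 * π ≤ 3 * π ^ 2 := by nlinarith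
        have := mul_le_mul_of_nonneg_right hππ
          (show (0:ℝ) ≤ k ^ 4 * exp (9 * t / 4) by positivity)
        nlinarith [this]
      linarith
    linarith
  have hEle : exp (-π * k ^ 2 * exp t)
      ≤ exp (-π * (k ^ 2 - 2)) * exp (-(2 * π) * exp t) := by
    rw [← Real.exp_add]
    apply exp_le_exp.2
    have key : (0:ℝ) ≤ π * ((k ^ 2 - 2) * (exp t - 1)) := by
      apply mul_nonneg pi_pos.le
      apply mul_nonneg (by nlinarith) (by linarith)
    nlinarith [key]
  calc |2 * π ^ 2 * k ^ 4 * exp (9 * t / 4) - 3 * π * k ^ 2 * exp (5 * t / 4)|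
      * exp (-π * k ^ 2 * exp t)
      ≤ (5 * π ^ 2 * k ^ 4 * exp (9 * t / 4))
          * (exp (-π * (k ^ 2 - 2)) * exp (-(2 * π) * exp t)) :=
        mul_le_mul habs hEle (exp_nonneg _) (by positivity)
    _ = (5 * π ^ 2 * k ^ 4 * exp (-π * (k ^ 2 - 2)))
          * (exp (9 * t / 4) * exp (-(2 * π) * exp t)) := by ring

lemma tail_bound {t : ℝ} (ht : 0 ≤ t) :
    |∑' n, PhiTerm (n + 1) t| ≤ Ctail * (exp (9 * t / 4) * exp (-(2 * π) * exp t)) := by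
  have hs : Summable (fun n => PhiTerm (n + 1) t) :=
    (summable_nat_add_iff 1).2 (summable_phiTerm t)
  have hbnd : ∀ n : ℕ, |PhiTerm (n + 1) t| ≤
      (5 * π ^ 2 * ((n : ℝ) + 2) ^ 4 * exp (-π * (((n : ℝ) + 2) ^ 2 - 2)))
        * (exp (9 * t / 4) * exp (-(2 * π) * exp t)) := by
    intro n
    have hk : (2 : ℝ) ≤ (n : ℝ) + 2 := by
      have : (0:ℝ) ≤ (n:ℝ) := n.cast_nonneg
      linarith
    have hcast : PhiTerm (n + 1) t =
        (2 * π ^ 2 * ((n : ℝ) + 2) ^ 4 * exp (9 * t / 4)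
          - 3 * π * ((n : ℝ) + 2) ^ 2 * exp (5 * t / 4))
          * exp (-π * ((n : ℝ) + 2) ^ 2 * exp t) := by
      rw [PhiTerm]; push_cast; ring_nf
    rw [hcast]
    exact term_bound hk ht
  have hsb : Summable (fun n : ℕ =>
      (5 * π ^ 2 * ((n : ℝ) + 2) ^ 4 * exp (-π * (((n : ℝ) + 2) ^ 2 - 2)))
        * (exp (9 * t / 4) * exp (-(2 * π) * exp t))) :=
    summable_ctail.mul_right _
  calc |∑' n, PhiTerm (n + 1) t| ≤ ∑' n, |PhiTerm (n + 1) t| := by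
        simpa [Real.norm_eq_abs] using
          norm_tsum_le_tsum_norm (f := fun n => PhiTerm (n + 1) t)
            (by simpa [Real.norm_eq_abs] using hs.abs)
    _ ≤ ∑' n : ℕ, (5 * π ^ 2 * ((n : ℝ) + 2) ^ 4 * exp (-π * (((n : ℝ) + 2) ^ 2 - 2)))
          * (exp (9 * t / 4) * exp (-(2 * π) * exp t)) :=
        Summable.tsum_le_tsum hbnd hs.abs hsb
    _ = Ctail * (exp (9 * t / 4) * exp (-(2 * π) * exp t)) := tsum_mul_right

lemma phiTerm0_mul (t : ℝ) :
    PhiTerm 0 t * (exp (2 * π * cosh t) * exp (-(9 * t) / 4))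
      = (2 * π ^ 2 - 3 * π * exp (-t)) * exp (π * exp (-t)) := by
  rw [PhiTerm, Real.cosh_eq]
  push_cast
  rw [show 2 * π * ((exp t + exp (-t)) / 2) = π * exp t + π * exp (-t) by ring, Real.exp_add]
  ring_nf
  simp only [mul_assoc, ← Real.exp_add]
  ring_nf

lemma phiP_mul (t : ℝ) :
    PhiP t * (exp (2 * π * cosh t) * exp (-(9 * t) / 4))
      = 2 * π ^ 2 * (1 + exp (-(9 * t) / 2)) := by
  rw [PhiP, Real.cosh_eq, Real.cosh_eq]
  rw [show (-2) * π * ((exp t + exp (-t)) / 2) = -(π * exp t) + -(π * exp (-t)) by ring,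
    Real.exp_add,
    show 2 * π * ((exp t + exp (-t)) / 2) = π * exp t + π * exp (-t) by ring, Real.exp_add]
  ring_nf
  simp only [mul_assoc, ← Real.exp_add]
  ring_nf
  simp only [Real.exp_zero, sq, ← Real.exp_add]
  ring_nf

lemma w_mul (t : ℝ) :
    (exp (9 * t / 4) * exp (-(2 * π) * exp t)) * (exp (2 * π * cosh t) * exp (-(9 * t) / 4))
      = exp (π * exp (-t) - π * exp t) := by
  rw [Real.cosh_eq]
  rw [show 2 * π * ((exp t + exp (-t)) / 2) = π * exp t + π * exp (-t) by ring, Real.exp_add]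
  ring_nf
  simp only [mul_assoc, ← Real.exp_add]
  ring_nf


lemma Phi_eq (t : ℝ) : Phi t = PhiTerm 0 t + ∑' n, PhiTerm (n + 1) t := by
  have h : Phi t = ∑' n, PhiTerm n t := rfl
  rw [h, Summable.tsum_eq_zero_add (summable_phiTerm t)]

/-- As `t → +∞`, `Φ(t)/Φ_P(t) → 1`. -/
theorem Phi_asymptotic_PhiP :
    Tendsto (fun t : ℝ => Phi t / PhiP t) atTop (nhds 1) := by
  set w : ℝ → ℝ := fun t => exp (2 * π * cosh t) * exp (-(9 * t) / 4) with hw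
  have hexp_neg : Tendsto (fun t : ℝ => exp (-t)) atTop (nhds 0) :=
    Real.tendsto_exp_neg_atTop_nhds_zero
  have h0w : Tendsto (fun t => PhiTerm 0 t * w t) atTop (nhds (2 * π ^ 2)) := by
    have hEq : (fun t => PhiTerm 0 t * w t)
        = fun t => (2 * π ^ 2 - 3 * π * exp (-t)) * exp (π * exp (-t)) :=
      funext fun t => phiTerm0_mul t
    rw [hEq]
    have h1 : Tendsto (fun t : ℝ => 2 * π ^ 2 - 3 * π * exp (-t)) atTop (nhds (2 * π ^ 2)) := by
      simpa using tendsto_const_nhds.sub (hexp_neg.const_mul (3 * π))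
    have h2 : Tendsto (fun t : ℝ => exp (π * exp (-t))) atTop (nhds 1) := by
      have h3 : Tendsto (fun t : ℝ => π * exp (-t)) atTop (nhds 0) := by
        simpa using hexp_neg.const_mul π
      simpa [Function.comp_def] using (Real.continuous_exp.tendsto 0).comp h3
    simpa using h1.mul h2
  have htailw : Tendsto (fun t => (∑' n, PhiTerm (n + 1) t) * w t) atTop (nhds 0) := by
    apply squeeze_zero_norm' (a := fun t => Ctail * exp (π * exp (-t) - π * exp t))
    · filter_upwards [eventually_ge_atTop (0 : ℝ)] with t ht
      have hwpos : 0 < w t := by rw [hw]; positivity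
      have h1 : ‖(∑' n, PhiTerm (n + 1) t) * w t‖ = |∑' n, PhiTerm (n + 1) t| * w t := by
        rw [Real.norm_eq_abs, abs_mul, abs_of_pos hwpos]
      rw [h1]
      calc |∑' n, PhiTerm (n + 1) t| * w t
          ≤ (Ctail * (exp (9 * t / 4) * exp (-(2 * π) * exp t))) * w t :=
            mul_le_mul_of_nonneg_right (tail_bound ht) hwpos.le
        _ = Ctail * ((exp (9 * t / 4) * exp (-(2 * π) * exp t)) * w t) := by ring
        _ = Ctail * exp (π * exp (-t) - π * exp t) := by rw [hw, w_mul]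
    · have hbot : Tendsto (fun t : ℝ => π * exp (-t) - π * exp t) atTop atBot := by
        apply Filter.Tendsto.add_atBot (by simpa using hexp_neg.const_mul π)
        have h1 : Tendsto (fun t : ℝ => π * exp t) atTop atTop :=
          Real.tendsto_exp_atTop.const_mul_atTop pi_pos
        exact tendsto_neg_atTop_atBot.comp h1
      simpa using (Real.tendsto_exp_atBot.comp hbot).const_mul Ctail
  have hPhiw : Tendsto (fun t => Phi t * w t) atTop (nhds (2 * π ^ 2)) := by
    have hEq : (fun t => Phi t * w t)
        = fun t => PhiTerm 0 t * w t + (∑' n, PhiTerm (n + 1) t) * w t :=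
      funext fun t => by rw [Phi_eq t]; ring
    rw [hEq]
    simpa using h0w.add htailw
  have hPhiPw : Tendsto (fun t => PhiP t * w t) atTop (nhds (2 * π ^ 2)) := by
    have hEq : (fun t => PhiP t * w t) = fun t => 2 * π ^ 2 * (1 + exp (-(9 * t) / 2)) :=
      funext fun t => phiP_mul t
    rw [hEq]
    have h1 : Tendsto (fun t : ℝ => exp (-(9 * t) / 2)) atTop (nhds 0) := by
      have h2 : Tendsto (fun t : ℝ => -(9 * t) / 2) atTop atBot := by
        have h3 : Tendsto (fun t : ℝ => (9 / 2 : ℝ) * t) atTop atTop :=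
          tendsto_id.const_mul_atTop (by norm_num)
        have h4 := tendsto_neg_atTop_atBot.comp h3
        refine h4.congr (fun t => by simp; ring)
      exact Real.tendsto_exp_atBot.comp h2
    have h5 : Tendsto (fun t : ℝ => (1:ℝ) + exp (-(9 * t) / 2)) atTop (nhds (1 + 0)) :=
      Tendsto.add (tendsto_const_nhds : Tendsto (fun _ : ℝ => (1:ℝ)) atTop (nhds 1)) h1
    have h6 := h5.const_mul (2 * π ^ 2)
    simpa using h6
  have hne : (2 * π ^ 2 : ℝ) ≠ 0 := by positivity
  have hdiv := hPhiw.div hPhiPw hne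
  have hEq : (fun t => Phi t / PhiP t) = fun t => (Phi t * w t) / (PhiP t * w t) := by
    funext t
    have hw0 : w t ≠ 0 := by rw [hw]; positivity
    rw [mul_div_mul_right _ _ hw0]
  rw [hEq]
  simpa [div_self hne, Pi.div_def] using hdiv
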